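/- arXiv:1610.03547 — 5 statements merged into one kernel-verified Lean document; each statement's English description precedes it below -/
import Mathlib

section
/- Let β : ℤ₊^d → ℝ be a multisequence whose moment matrix M(β) defines a positive semidefinite bilinear form, i.e. pᵀ M(β) p ≥ 0 for all polynomials p. If a polynomial p satisfies M(β) pⁿ = 0 for some n ≥ 1 (meaning ∑_j (pⁿ)_j β_{i+j} = 0 for all multi-indices i), then M(β) p = 0. -/
open MvPolynomial

/-- The vector `M(β) p`, with `i`-th entry `∑_j p_j β_{i+j}`. -/
noncomputable def momentVec (d : ℕ) (β : (Fin d →₀ ℕ) → ℝ) (p : MvPolynomial (Fin d) ℝ) :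
    (Fin d →₀ ℕ) → ℝ :=
  fun i => ∑ j ∈ p.support, coeff j p * β (i + j)


noncomputable def Lfun (d : ℕ) (β : (Fin d →₀ ℕ) → ℝ) : MvPolynomial (Fin d) ℝ →ₗ[ℝ] ℝ :=
  Finsupp.linearCombination ℝ β ∘ₗ (AddMonoidAlgebra.coeffLinearEquiv ℝ).toLinearMap

lemma Lfun_monomial (d : ℕ) (β : (Fin d →₀ ℕ) → ℝ) (i : Fin d →₀ ℕ) (c : ℝ) :
    Lfun d β (monomial i c) = c * β i :=
  Finsupp.linearCombination_single ℝ (v := β) c i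

lemma Lfun_eq (d : ℕ) (β : (Fin d →₀ ℕ) → ℝ) (q : MvPolynomial (Fin d) ℝ) :
    Lfun d β q = ∑ m ∈ q.support, coeff m q * β m := rfl

lemma Lfun_mul (d : ℕ) (β : (Fin d →₀ ℕ) → ℝ) (p q : MvPolynomial (Fin d) ℝ) :
    Lfun d β (p * q) = ∑ i ∈ p.support, ∑ j ∈ q.support, coeff i p * coeff j q * β (i + j) := by
  conv_lhs => rw [← support_sum_monomial_coeff p, ← support_sum_monomial_coeff q]
  rw [Finset.sum_mul_sum, map_sum]
  refine Finset.sum_congr rfl fun i hi => ?_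
  rw [map_sum]
  refine Finset.sum_congr rfl fun j hj => ?_
  rw [monomial_mul, Lfun_monomial]

lemma Lfun_CS (d : ℕ) (β : (Fin d →₀ ℕ) → ℝ)
    (hpos : ∀ q : MvPolynomial (Fin d) ℝ, 0 ≤ Lfun d β (q ^ 2))
    (a b : MvPolynomial (Fin d) ℝ) :
    (Lfun d β (a * b)) ^ 2 ≤ Lfun d β (a ^ 2) * Lfun d β (b ^ 2) := by
  have key : ∀ t : ℝ, 0 ≤ Lfun d β (a ^ 2) * (t * t) + (2 * Lfun d β (a * b)) * t
      + Lfun d β (b ^ 2) := by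
    intro t
    have hexp : (C t * a + b) ^ 2
        = C (t ^ 2) * a ^ 2 + C (2 * t) * (a * b) + b ^ 2 := by
      push_cast [map_mul, map_pow, map_ofNat]
      ring
    have := hpos (C t * a + b)
    rw [hexp] at this
    simp only [map_add] at this
    rw [← smul_eq_C_mul, ← smul_eq_C_mul, map_smul, map_smul] at this
    simp only [smul_eq_mul] at this
    nlinarith [this]
  have hd := discrim_le_zero (a := Lfun d β (a ^ 2)) (b := 2 * Lfun d β (a * b)) (c := Lfun d β (b ^ 2)) key
  rw [discrim] at hd
  nlinarith [hd]

/-- If the moment matrix form is positive semidefinite and `M(β) pⁿ = 0` for some `n ≥ 1`,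
then `M(β) p = 0`. -/
theorem momentVec_pow_zero (d : ℕ) (β : (Fin d →₀ ℕ) → ℝ)
    (hpsd : ∀ p : MvPolynomial (Fin d) ℝ,
      0 ≤ ∑ i ∈ p.support, ∑ j ∈ p.support, coeff i p * coeff j p * β (i + j))
    (p : MvPolynomial (Fin d) ℝ) (n : ℕ) (hn : 1 ≤ n)
    (h : momentVec d β (p ^ n) = 0) :
    momentVec d β p = 0 := by
  -- positivity of L on squares
  have hpos : ∀ q : MvPolynomial (Fin d) ℝ, 0 ≤ Lfun d β (q ^ 2) := by
    intro q
    rw [sq, Lfun_mul]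
    exact hpsd q
  -- momentVec in terms of L
  have hmv : ∀ (q : MvPolynomial (Fin d) ℝ) (i : Fin d →₀ ℕ),
      momentVec d β q i = Lfun d β (monomial i 1 * q) := by
    intro q i
    rw [Lfun_mul, momentVec]
    rw [support_monomial]
    simp [coeff_monomial]
  -- h gives L(r * p^n) = 0 for all r
  have hLn : ∀ r : MvPolynomial (Fin d) ℝ, Lfun d β (r * p ^ n) = 0 := by
    intro r
    have hmono : ∀ i : Fin d →₀ ℕ, Lfun d β (monomial i 1 * p ^ n) = 0 := by
      intro i
      rw [← hmv, h]
      rfl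
    conv_lhs => rw [← support_sum_monomial_coeff r]
    rw [Finset.sum_mul, map_sum]
    refine Finset.sum_eq_zero fun i hi => ?_
    have : (monomial i (coeff i r) : MvPolynomial (Fin d) ℝ) = coeff i r • monomial i 1 := by
      rw [smul_monomial, smul_eq_mul, mul_one]
    rw [this, smul_mul_assoc, map_smul, hmono, smul_zero]
  -- downward induction
  have key : ∀ j : ℕ, 1 ≤ n - j → ∀ r : MvPolynomial (Fin d) ℝ, Lfun d β (r * p ^ (n - j)) = 0 := by
    intro j
    induction j with
    | zero => intro _ r; simpa using hLn r
    | succ j ih =>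
      intro hj r
      set k := n - (j + 1) with hk
      have hk1 : 1 ≤ k := hj
      have hnj : n - j = k + 1 := by omega
      have ihk : ∀ r : MvPolynomial (Fin d) ℝ, Lfun d β (r * p ^ (k + 1)) = 0 := by
        intro r
        have := ih (by omega) r
        rwa [hnj] at this
      have hsq : Lfun d β ((p ^ k) ^ 2) = 0 := by
        have : (p ^ k) ^ 2 = p ^ (k - 1) * p ^ (k + 1) := by
          rw [← pow_add, ← pow_mul]; congr 1; omega
        rw [this, ihk]
      have hcs := Lfun_CS d β hpos r (p ^ k)
      rw [hsq, mul_zero] at hcs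
      have : Lfun d β (r * p ^ k) = 0 := by nlinarith [sq_nonneg (Lfun d β (r * p ^ k))]
      exact this
  have h1 : ∀ r : MvPolynomial (Fin d) ℝ, Lfun d β (r * p) = 0 := by
    intro r
    have := key (n - 1) (by omega) r
    have hn1 : n - (n - 1) = 1 := by omega
    rwa [hn1, pow_one] at this
  funext i
  rw [hmv p i, h1]
  rfl
end

section
/- (Binet formula in d variables) Let β : ℤ₊^d → ℝ be a recursively generated multisequence with characteristic polynomials (p₁,…,p_d), where each p_j(x) = ∏_{l=0}^{m_j−1}(x − λ_{j,l}) has m_j distinct complex roots. Then there exist complex numbers c_{(l₁,…,l_d)}, uniquely determined by the initial values {β_i : 0 ≤ i_j ≤ m_j − 1}, such that β_{(i₁,…,i_d)} = ∑_{l₁=0}^{m₁−1} ⋯ ∑_{l_d=0}^{m_d−1} c_{(l₁,…,l_d)} λ_{1,l₁}^{i₁} ⋯ λ_{d,l_d}^{i_d} for all (i₁,…,i_d) ∈ ℤ₊^d. -/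
open Polynomial

/-! ### Auxiliary lemmas -/

private lemma charpoly_natDegree {n : ℕ} (v : Fin n → ℂ) :
    (∏ l : Fin n, (X - C (v l))).natDegree = n := by
  rw [Polynomial.natDegree_prod_of_monic _ _ (fun l _ => monic_X_sub_C _)]
  simp

private lemma charpoly_coeff_top {n : ℕ} (v : Fin n → ℂ) :
    (∏ l : Fin n, (X - C (v l))).coeff n = 1 := by
  have h : (∏ l : Fin n, (X - C (v l))).Monic :=
    monic_prod_of_monic _ _ (fun l _ => monic_X_sub_C _)
  have := h.coeff_natDegree
  rwa [charpoly_natDegree] at this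

private lemma charpoly_sum_eval {n : ℕ} (v : Fin n → ℂ) (l0 : Fin n) :
    ∑ k ∈ Finset.range (n + 1), (∏ l : Fin n, (X - C (v l))).coeff k * v l0 ^ k = 0 := by
  have hdeg : (∏ l : Fin n, (X - C (v l))).natDegree < n + 1 := by
    rw [charpoly_natDegree]; omega
  have h := Polynomial.eval_eq_sum_range' hdeg (v l0)
  rw [← h, Polynomial.eval_prod]
  apply Finset.prod_eq_zero (Finset.mem_univ l0)
  simp

/-- Univariate Vandermonde injectivity. -/
private lemma vand1 {n : ℕ} (v : Fin n → ℂ) (hv : Function.Injective v) (a : Fin n → ℂ)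
    (h : ∀ i : Fin n, ∑ l, a l * v l ^ (i : ℕ) = 0) : a = 0 := by
  apply Matrix.eq_zero_of_mulVec_eq_zero (M := Matrix.transpose (Matrix.vandermonde v))
  · rw [Matrix.det_transpose, Matrix.det_vandermonde]
    refine Finset.prod_ne_zero_iff.mpr (fun i _ => Finset.prod_ne_zero_iff.mpr (fun j hj => ?_))
    rw [Finset.mem_Ioi] at hj
    exact sub_ne_zero.mpr (fun he => absurd (hv he) (Fin.ne_of_gt hj))
  · funext i
    have := h i
    simp only [Matrix.mulVec, dotProduct, Matrix.transpose_apply, Matrix.vandermonde,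
      Matrix.of_apply, Pi.zero_apply]
    rw [← this]
    exact Finset.sum_congr rfl (fun l _ => mul_comm _ _)

/-- Multivariate Vandermonde injectivity. -/
private lemma vandd : ∀ (d : ℕ) (m : Fin d → ℕ) (lam : (j : Fin d) → Fin (m j) → ℂ),
    (∀ j, Function.Injective (lam j)) → ∀ (c : ((j : Fin d) → Fin (m j)) → ℂ),
    (∀ i : (j : Fin d) → Fin (m j),
      ∑ l : (j : Fin d) → Fin (m j), c l * ∏ j, lam j (l j) ^ (i j : ℕ) = 0) → c = 0 := by
  intro d
  induction d with
  | zero =>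
    intro m lam _ c h
    funext l
    have := h l
    rw [Fintype.sum_unique] at this
    simpa [Subsingleton.elim (default : (j : Fin 0) → Fin (m j)) l] using this
  | succ d ih =>
    intro m lam hinj c h
    have hsum : ∀ (F : ((j : Fin (d + 1)) → Fin (m j)) → ℂ),
        ∑ l, F l = ∑ l0 : Fin (m 0), ∑ l' : (j : Fin d) → Fin (m j.succ),
          F (Fin.cons l0 l') := by
      intro F
      rw [← Equiv.sum_comp (Fin.consEquiv fun j => Fin (m j)) F, Fintype.sum_prod_type]
      rfl
    have key : ∀ (i' : (j : Fin d) → Fin (m j.succ)) (l0 : Fin (m 0)),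
        ∑ l' : (j : Fin d) → Fin (m j.succ),
          c (Fin.cons l0 l') * ∏ j : Fin d, lam j.succ (l' j) ^ ((i' j : ℕ)) = 0 := by
      intro i'
      have h1 : ∀ i0 : Fin (m 0),
          ∑ l0, (∑ l' : (j : Fin d) → Fin (m j.succ),
            c (Fin.cons l0 l') * ∏ j : Fin d, lam j.succ (l' j) ^ ((i' j : ℕ)))
              * lam 0 l0 ^ (i0 : ℕ) = 0 := by
        intro i0
        have h2 := h (Fin.cons i0 i')
        rw [hsum] at h2
        rw [← h2]
        refine Finset.sum_congr rfl (fun l0 _ => ?_)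
        rw [Finset.sum_mul]
        refine Finset.sum_congr rfl (fun l' _ => ?_)
        rw [Fin.prod_univ_succ]
        simp only [Fin.cons_zero, Fin.cons_succ]
        ring
      intro l0
      have := congrFun (vand1 (lam 0) (hinj 0) _ h1) l0
      simpa using this
    funext l
    have := congrFun (ih (fun j => m j.succ) (fun j => lam j.succ) (fun j => hinj j.succ)
      (fun l' => c (Fin.cons (l 0) l')) (fun i' => key i' (l 0))) (Fin.tail l)
    rw [Fin.cons_self_tail] at this
    simpa using this

/-- Sequences satisfying all the recurrences are determined by their values on the box. -/
private lemma rec_ext (d : ℕ) (m : Fin d → ℕ) (p : Fin d → ℂ[X])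
    (hmon : ∀ j, (p j).coeff (m j) = 1)
    (f g : (Fin d → ℕ) → ℂ)
    (hf : ∀ j i, ∑ k ∈ Finset.range (m j + 1), (p j).coeff k * f (i + k • (Pi.single j (1:ℕ) : Fin d → ℕ)) = 0)
    (hg : ∀ j i, ∑ k ∈ Finset.range (m j + 1), (p j).coeff k * g (i + k • (Pi.single j (1:ℕ) : Fin d → ℕ)) = 0)
    (hbox : ∀ i : Fin d → ℕ, (∀ j, i j < m j) → f i = g i) :
    ∀ i, f i = g i := by
  have key : ∀ n : ℕ, ∀ i : Fin d → ℕ, (∑ j, i j) = n → f i = g i := by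
    intro n
    induction n using Nat.strong_induction_on with
    | _ n ihn =>
      intro i hi
      by_cases hb : ∀ j, i j < m j
      · exact hbox i hb
      · push_neg at hb
        obtain ⟨j, hj⟩ := hb
        set i' : Fin d → ℕ := Function.update i j (i j - m j) with hi'def
        have hii : i' + m j • (Pi.single j (1:ℕ) : Fin d → ℕ) = i := by
          funext j'
          by_cases h : j' = j
          · subst h
            simp only [Pi.add_apply, Pi.smul_apply, smul_eq_mul, hi'def,
              Function.update_self, Pi.single_eq_same, mul_one]
            omega
          · simp [hi'def, Function.update_of_ne h, Pi.single_eq_of_ne h]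
        have hsingle : ∀ (k : ℕ), (∑ j', (i' + k • (Pi.single j (1:ℕ) : Fin d → ℕ)) j') = (∑ j', i' j') + k := by
          intro k
          simp only [Pi.add_apply, Pi.smul_apply, smul_eq_mul]
          rw [Finset.sum_add_distrib, ← Finset.mul_sum, Finset.sum_pi_single']
          simp
        have hsum_i : (∑ j', i' j') + m j = n := by
          rw [← hsingle (m j)]
          rw [show (fun j' => (i' + (m j) • (Pi.single j (1:ℕ) : Fin d → ℕ)) j') = i from funext (fun j' => by rw [hii])]
          exact hi
        have heq : ∀ k ∈ Finset.range (m j),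
            f (i' + k • (Pi.single j (1:ℕ) : Fin d → ℕ)) = g (i' + k • (Pi.single j (1:ℕ) : Fin d → ℕ)) := by
          intro k hk
          rw [Finset.mem_range] at hk
          exact ihn ((∑ j', i' j') + k) (by omega) _ (hsingle k)
        have hf' := hf j i'
        have hg' := hg j i'
        rw [Finset.sum_range_succ, hmon j, one_mul, hii] at hf' hg'
        have hsumeq :
            ∑ k ∈ Finset.range (m j), (p j).coeff k * f (i' + k • (Pi.single j (1:ℕ) : Fin d → ℕ)) =
            ∑ k ∈ Finset.range (m j), (p j).coeff k * g (i' + k • (Pi.single j (1:ℕ) : Fin d → ℕ)) :=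
          Finset.sum_congr rfl (fun k hk => by rw [heq k hk])
        have hfg : (∑ k ∈ Finset.range (m j), (p j).coeff k * f (i' + k • (Pi.single j (1:ℕ) : Fin d → ℕ))) + f i
            = (∑ k ∈ Finset.range (m j), (p j).coeff k * g (i' + k • (Pi.single j (1:ℕ) : Fin d → ℕ))) + g i := by
          rw [hf', hg']
        rw [hsumeq] at hfg
        exact add_left_cancel hfg
  exact fun i => key (∑ j, i j) i rfl

/-- Exponential sums satisfy the recurrences. -/
private lemma expo_rec (d : ℕ) (m : Fin d → ℕ) (lam : (j : Fin d) → Fin (m j) → ℂ)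
    (c : ((j : Fin d) → Fin (m j)) → ℂ) (j : Fin d) (i : Fin d → ℕ) :
    ∑ k ∈ Finset.range (m j + 1), (∏ l : Fin (m j), (X - C (lam j l))).coeff k *
      (∑ l : (j : Fin d) → Fin (m j), c l *
        ∏ j' : Fin d, lam j' (l j') ^ ((i + k • (Pi.single j (1:ℕ) : Fin d → ℕ)) j')) = 0 := by
  have hprod : ∀ (k : ℕ) (l : (j : Fin d) → Fin (m j)),
      (∏ j', lam j' (l j') ^ ((i + k • (Pi.single j (1:ℕ) : Fin d → ℕ)) j')) =
      (∏ j', lam j' (l j') ^ (i j')) * lam j (l j) ^ k := by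
    intro k l
    have hterm : ∀ j', lam j' (l j') ^ ((i + k • (Pi.single j (1:ℕ) : Fin d → ℕ)) j') =
        lam j' (l j') ^ (i j') * (if j' = j then lam j (l j) ^ k else 1) := by
      intro j'
      by_cases h : j' = j
      · subst h
        simp [Pi.single_eq_same, pow_add]
      · simp [Pi.single_eq_of_ne h, h]
    rw [Finset.prod_congr rfl (fun j' _ => hterm j'), Finset.prod_mul_distrib]
    congr 1
    simp
  simp only [hprod, Finset.mul_sum]
  rw [Finset.sum_comm]
  apply Finset.sum_eq_zero
  intro l _
  have hre : ∑ k ∈ Finset.range (m j + 1), (∏ l' : Fin (m j), (X - C (lam j l'))).coeff k *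
        (c l * ((∏ j', lam j' (l j') ^ (i j')) * lam j (l j) ^ k))
      = (c l * ∏ j', lam j' (l j') ^ (i j')) *
        ∑ k ∈ Finset.range (m j + 1),
          (∏ l' : Fin (m j), (X - C (lam j l'))).coeff k * lam j (l j) ^ k := by
    rw [Finset.mul_sum]
    exact Finset.sum_congr rfl (fun k _ => by ring)
  rw [hre, charpoly_sum_eval, mul_zero]

/-- Binet formula in `d` variables: if `β : ℤ₊^d → ℝ` is recursively generated with
characteristic polynomials `p_j(x) = ∏_{l} (x - λ_{j,l})` having distinct roots, then
there are unique complex coefficients `c_{(l₁,…,l_d)}` with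
`β_i = ∑_{l} c_l λ_{1,l₁}^{i₁} ⋯ λ_{d,l_d}^{i_d}`. -/
theorem binet_multivariable (d : ℕ) (m : Fin d → ℕ) (β : (Fin d → ℕ) → ℝ)
    (lam : (j : Fin d) → Fin (m j) → ℂ)
    (hdist : ∀ j, Function.Injective (lam j))
    (hrec : ∀ j : Fin d, ∀ i : Fin d → ℕ,
      ∑ k ∈ Finset.range (m j + 1),
        (∏ l : Fin (m j), (X - C (lam j l))).coeff k
          * (β (i + k • Pi.single j 1) : ℂ) = 0) :
    ∃! c : ((j : Fin d) → Fin (m j)) → ℂ,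
      ∀ i : Fin d → ℕ,
        (β i : ℂ) = ∑ l : (j : Fin d) → Fin (m j), c l * ∏ j : Fin d, lam j (l j) ^ i j := by
  classical
  -- The Vandermonde linear map on functions on the box
  let V : (((j : Fin d) → Fin (m j)) → ℂ) →ₗ[ℂ] (((j : Fin d) → Fin (m j)) → ℂ) :=
    { toFun := fun c i => ∑ l, c l * ∏ j, lam j (l j) ^ (i j : ℕ)
      map_add' := by
        intro a b
        funext i
        simp [add_mul, Finset.sum_add_distrib]
      map_smul' := by
        intro r a
        funext i
        simp [Finset.mul_sum, mul_assoc] }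
  have hV0 : ∀ c, V c = 0 → c = 0 := fun c hc =>
    vandd d m lam hdist c (fun i => congrFun hc i)
  have hVinj : Function.Injective V := by
    intro a b hab
    have : a - b = 0 := hV0 (a - b) (by rw [map_sub, hab, sub_self])
    rwa [sub_eq_zero] at this
  obtain ⟨c, hc⟩ := LinearMap.surjective_of_injective hVinj
    (fun i : (j : Fin d) → Fin (m j) => (β (fun j => (i j : ℕ)) : ℂ))
  have hcbox : ∀ i : (j : Fin d) → Fin (m j),
      ∑ l, c l * ∏ j, lam j (l j) ^ (i j : ℕ) = (β (fun j => (i j : ℕ)) : ℂ) :=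
    fun i => congrFun hc i
  -- the main formula
  have hformula : ∀ i : Fin d → ℕ,
      (β i : ℂ) = ∑ l : (j : Fin d) → Fin (m j), c l * ∏ j : Fin d, lam j (l j) ^ i j := by
    apply rec_ext d m (fun j => ∏ l : Fin (m j), (X - C (lam j l)))
      (fun j => charpoly_coeff_top (lam j))
      (fun i => (β i : ℂ))
      (fun i => ∑ l : (j : Fin d) → Fin (m j), c l * ∏ j : Fin d, lam j (l j) ^ i j)
      hrec
      (fun j i => expo_rec d m lam c j i)
    intro i hb
    have := hcbox (fun j => (⟨i j, hb j⟩ : Fin (m j)))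
    simpa using this.symm
  refine ⟨c, hformula, ?_⟩
  intro c' hc'
  have hdiff : c' - c = 0 := by
    apply vandd d m lam hdist
    intro i
    have h1 := hc' (fun j => (i j : ℕ))
    have h2 := hformula (fun j => (i j : ℕ))
    calc ∑ l, (c' - c) l * ∏ j, lam j (l j) ^ (i j : ℕ)
        = (∑ l, c' l * ∏ j, lam j (l j) ^ (i j : ℕ))
          - ∑ l, c l * ∏ j, lam j (l j) ^ (i j : ℕ) := by
          rw [← Finset.sum_sub_distrib]
          exact Finset.sum_congr rfl (fun l _ => by simp [sub_mul])
      _ = 0 := by rw [← h1, ← h2, sub_self]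
  rwa [sub_eq_zero] at hdiff
end

section
/- Let μ = ∑_{l∈I} c_l δ_{λ_l} be a finitely atomic measure on ℝ^d with distinct atoms λ_l ∈ ℝ^d and weights c_l ∈ ℝ, and let β_i = ∑_{l∈I} c_l λ_l^i for i ∈ ℤ₊^d (where λ^i = λ₁^{i₁}⋯λ_d^{i_d}). If M(β) is positive semidefinite, then c_l ≥ 0 for every l ∈ I. Consequently if all c_l ≠ 0, then all c_l > 0 and μ is a positive measure. -/
open MvPolynomial

theorem atomic_key (d : ℕ) (ι : Type) [Fintype ι]
    (c : ι → ℝ) (lam : ι → Fin d → ℝ)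
    (β : (Fin d →₀ ℕ) → ℝ)
    (hβ : ∀ i : Fin d →₀ ℕ, β i = ∑ l : ι, c l * ∏ t : Fin d, lam l t ^ i t)
    (p : MvPolynomial (Fin d) ℝ) :
    (∑ i ∈ p.support, ∑ j ∈ p.support, coeff i p * coeff j p * β (i + j))
      = ∑ s : ι, c s * (eval (lam s) p) ^ 2 := by
  simp only [hβ, eval_eq', sq, Finset.sum_mul_sum, Finset.mul_sum, Finset.sum_mul,
    Finsupp.add_apply, pow_add, Finset.prod_mul_distrib]
  rw [Finset.sum_congr rfl fun i _ => Finset.sum_comm, Finset.sum_comm]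
  refine Finset.sum_congr rfl fun s _ => ?_
  refine Finset.sum_congr rfl fun i _ => ?_
  refine Finset.sum_congr rfl fun j _ => ?_
  ring

/-- If `β_i = ∑_l c_l λ_l^i` for distinct atoms `λ_l ∈ ℝ^d` and real weights `c_l`,
and the moment matrix `M(β)` is positive semidefinite, then every `c_l ≥ 0`;
consequently, if all `c_l ≠ 0` then all `c_l > 0`. -/
theorem atomic_weights_nonneg (d : ℕ) (ι : Type) [Fintype ι]
    (c : ι → ℝ) (lam : ι → Fin d → ℝ) (hdist : Function.Injective lam)
    (β : (Fin d →₀ ℕ) → ℝ)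
    (hβ : ∀ i : Fin d →₀ ℕ, β i = ∑ l : ι, c l * ∏ t : Fin d, lam l t ^ i t)
    (hpsd : ∀ p : MvPolynomial (Fin d) ℝ,
      0 ≤ ∑ i ∈ p.support, ∑ j ∈ p.support, coeff i p * coeff j p * β (i + j)) :
    (∀ l : ι, 0 ≤ c l) ∧ ((∀ l : ι, c l ≠ 0) → ∀ l : ι, 0 < c l) := by
  classical
  have main : ∀ l : ι, 0 ≤ c l := by
    intro l
    have hsep : ∀ s : ι, s ≠ l → ∃ t : Fin d, lam s t ≠ lam l t := by
      intro s hs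
      by_contra h
      push_neg at h
      exact hs (hdist (funext h))
    set ts : {s // s ∈ Finset.univ.erase l} → Fin d := fun s =>
      (hsep s.1 (Finset.ne_of_mem_erase s.2)).choose with hts
    have hts' : ∀ s, lam s.1 (ts s) ≠ lam l (ts s) := fun s =>
      (hsep s.1 (Finset.ne_of_mem_erase s.2)).choose_spec
    set L : MvPolynomial (Fin d) ℝ :=
      ∏ s ∈ (Finset.univ.erase l).attach,
        (C (lam l (ts s) - lam s.1 (ts s))⁻¹ * (X (ts s) - C (lam s.1 (ts s)))) with hL
    have hLl : eval (lam l) L = 1 := by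
      rw [hL, map_prod]
      apply Finset.prod_eq_one
      intro s _
      have hne : lam l (ts s) - lam s.1 (ts s) ≠ 0 := sub_ne_zero.mpr (hts' s).symm
      simp [inv_mul_cancel₀ hne]
    have hLs : ∀ s : ι, s ≠ l → eval (lam s) L = 0 := by
      intro s hs
      rw [hL, map_prod]
      apply Finset.prod_eq_zero
        (Finset.mem_attach _ ⟨s, Finset.mem_erase.mpr ⟨hs, Finset.mem_univ s⟩⟩)
      simp
    have h := hpsd L
    rw [atomic_key d ι c lam β hβ L] at h
    rw [Finset.sum_eq_single l] at h
    · simpa [hLl] using h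
    · intro s _ hs
      simp [hLs s hs]
    · intro h'
      exact absurd (Finset.mem_univ l) h'
  refine ⟨main, fun h l => lt_of_le_of_ne (main l) (Ne.symm (h l))⟩
end

section
/- Let β : ℤ₊^d → ℝ be a multisequence such that the moment matrix M(β) is positive semidefinite and has finite rank (as a bilinear form on polynomials). Then β is recursively generated: for each l ∈ {1,…,d} there exists a monic univariate polynomial p_l such that ∑_k (p_l)_k β_{i+kε_l} = 0 for all i ∈ ℤ₊^d. -/
open MvPolynomial

/-- If the moment matrix `M(β)` is positive semidefinite and of finite rank (its column
space is finite dimensional), then `β` is recursively generated: for each `l` there is a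
monic univariate polynomial `p_l` with `∑_k (p_l)_k β_{i+kε_l} = 0` for all `i`. -/
theorem finiteRank_psd_implies_recursive (d : ℕ) (β : (Fin d →₀ ℕ) → ℝ)
    (hpsd : ∀ p : MvPolynomial (Fin d) ℝ,
      0 ≤ ∑ i ∈ p.support, ∑ j ∈ p.support, coeff i p * coeff j p * β (i + j))
    (hfin : Module.Finite ℝ
      (Submodule.span ℝ
        (Set.range fun j : Fin d →₀ ℕ => (fun i : Fin d →₀ ℕ => β (i + j))))) :
    ∀ l : Fin d, ∃ p : Polynomial ℝ, p.Monic ∧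
      ∀ i : Fin d →₀ ℕ,
        ∑ k ∈ Finset.range (p.natDegree + 1),
          p.coeff k * β (i + Finsupp.single l k) = 0 := by
  intro l
  set V := Submodule.span ℝ
      (Set.range fun j : Fin d →₀ ℕ => (fun i : Fin d →₀ ℕ => β (i + j))) with hV
  haveI : Module.Finite ℝ V := hfin
  -- the columns indexed by powers of x_l
  set f : ℕ → ((Fin d →₀ ℕ) → ℝ) := fun k => fun i => β (i + Finsupp.single l k) with hf
  have hmem : ∀ k, f k ∈ V := by
    intro k
    exact Submodule.subset_span ⟨Finsupp.single l k, rfl⟩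
  set g : ℕ → V := fun k => ⟨f k, hmem k⟩ with hg
  have hnli : ¬ LinearIndependent ℝ g := by
    intro h
    haveI := h.finite
    exact not_finite ℕ
  rw [linearIndependent_iff'] at hnli
  push_neg at hnli
  obtain ⟨s, c, hsum, i₀, hi₀s, hc₀⟩ := hnli
  -- the relation among the functions f
  have hrel : ∀ i : Fin d →₀ ℕ, ∑ k ∈ s, c k * β (i + Finsupp.single l k) = 0 := by
    intro i
    have hv : ((∑ k ∈ s, c k • g k : V) : (Fin d →₀ ℕ) → ℝ) = 0 := by
      rw [hsum]; rfl
    have hv2 : (∑ k ∈ s, c k • f k) = (0 : (Fin d →₀ ℕ) → ℝ) := by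
      rw [← hv]
      push_cast
      rfl
    have := congrFun hv2 i
    simpa using this
  -- build the polynomial
  set q : Polynomial ℝ := ∑ k ∈ s, Polynomial.C (c k) * Polynomial.X ^ k with hq
  have hcoeff : ∀ m, q.coeff m = if m ∈ s then c m else 0 := by
    intro m
    rw [hq, Polynomial.finset_sum_coeff]
    simp only [Polynomial.coeff_C_mul, Polynomial.coeff_X_pow]
    simp only [mul_ite, mul_one, mul_zero, eq_comm (a := m)]
    exact Finset.sum_ite_eq' s m (fun k => c k)
  have hq0 : q ≠ 0 := by
    intro h
    have := hcoeff i₀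
    rw [h] at this
    simp [hi₀s] at this
    exact hc₀ this.symm
  -- the relation, re-indexed over the coefficient range of q
  have hrel2 : ∀ i : Fin d →₀ ℕ,
      ∑ k ∈ Finset.range (q.natDegree + 1), q.coeff k * β (i + Finsupp.single l k) = 0 := by
    intro i
    have h1 : ∑ k ∈ Finset.range (q.natDegree + 1), q.coeff k * β (i + Finsupp.single l k)
        = ∑ k ∈ s ∪ Finset.range (q.natDegree + 1),
            q.coeff k * β (i + Finsupp.single l k) := by
      refine Finset.sum_subset Finset.subset_union_right ?_
      intro x _ hx
      rw [Finset.mem_range, not_lt] at hx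
      rw [Polynomial.coeff_eq_zero_of_natDegree_lt (by omega)]
      ring
    have h2 : ∑ k ∈ s ∪ Finset.range (q.natDegree + 1),
            q.coeff k * β (i + Finsupp.single l k)
        = ∑ k ∈ s, q.coeff k * β (i + Finsupp.single l k) := by
      refine (Finset.sum_subset Finset.subset_union_left ?_).symm
      intro x _ hx
      rw [hcoeff x, if_neg hx]
      ring
    rw [h1, h2]
    calc ∑ k ∈ s, q.coeff k * β (i + Finsupp.single l k)
        = ∑ k ∈ s, c k * β (i + Finsupp.single l k) := by
          refine Finset.sum_congr rfl fun k hk => ?_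
          rw [hcoeff k, if_pos hk]
      _ = 0 := hrel i
  -- normalize to a monic polynomial
  refine ⟨q * Polynomial.C q.leadingCoeff⁻¹, Polynomial.monic_mul_leadingCoeff_inv hq0, ?_⟩
  intro i
  have ha : q.leadingCoeff⁻¹ ≠ 0 := inv_ne_zero (Polynomial.leadingCoeff_ne_zero.mpr hq0)
  have hdeg : (q * Polynomial.C q.leadingCoeff⁻¹).natDegree = q.natDegree :=
    Polynomial.natDegree_mul_C ha
  rw [hdeg]
  have : ∑ k ∈ Finset.range (q.natDegree + 1),
      (q * Polynomial.C q.leadingCoeff⁻¹).coeff k * β (i + Finsupp.single l k)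
      = q.leadingCoeff⁻¹ * ∑ k ∈ Finset.range (q.natDegree + 1),
          q.coeff k * β (i + Finsupp.single l k) := by
    rw [Finset.mul_sum]
    refine Finset.sum_congr rfl fun k _ => ?_
    rw [Polynomial.coeff_mul_C]
    ring
  rw [this, hrel2 i, mul_zero]
end

section
/- Let β_i = ∑_{l∈I} c_l λ_l^i with c_l > 0 and distinct λ_l ∈ ℝ^d, and let q ∈ ℝ[x₁,…,x_d]. If the localizing moment matrix M(q*β), with entries (q*β)_{i+j}, is positive semidefinite, then q(λ_l) ≥ 0 for every l ∈ I; i.e. the support of the measure ∑ c_l δ_{λ_l} is contained in {x ∈ ℝ^d : q(x) ≥ 0}. -/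
open MvPolynomial

/-- If `β_i = ∑_l c_l λ_l^i` with `c_l > 0` and distinct `λ_l ∈ ℝ^d`, and the localizing
moment matrix `M(q*β)` is positive semidefinite, then `q(λ_l) ≥ 0` for every atom; i.e.
the support of the measure is contained in `{x : q(x) ≥ 0}`. -/
theorem localizing_psd_implies_support (d : ℕ) (ι : Type) [Fintype ι]
    (c : ι → ℝ) (hc : ∀ l, 0 < c l)
    (lam : ι → Fin d → ℝ) (hdist : Function.Injective lam)
    (β : (Fin d →₀ ℕ) → ℝ)
    (hβ : ∀ i : Fin d →₀ ℕ, β i = ∑ l : ι, c l * ∏ t : Fin d, lam l t ^ i t)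
    (q : MvPolynomial (Fin d) ℝ)
    (hpsd : ∀ p : MvPolynomial (Fin d) ℝ,
      0 ≤ ∑ i ∈ p.support, ∑ j ∈ p.support,
            coeff i p * coeff j p *
              (∑ γ ∈ q.support, coeff γ q * β (γ + (i + j)))) :
    ∀ l : ι, 0 ≤ eval (lam l) q := by
  classical
  -- monomial evaluation
  set m : ι → (Fin d →₀ ℕ) → ℝ := fun s i => ∏ t : Fin d, lam s t ^ i t with hm
  have hmadd : ∀ s (a b : Fin d →₀ ℕ), m s (a + b) = m s a * m s b := by
    intro s a b
    simp [hm, Finsupp.add_apply, pow_add, Finset.prod_mul_distrib]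
  have heval : ∀ (s : ι) (p : MvPolynomial (Fin d) ℝ),
      eval (lam s) p = ∑ i ∈ p.support, coeff i p * m s i := by
    intro s p
    rw [eval_eq']
  -- key identity for the quadratic form
  have key : ∀ p : MvPolynomial (Fin d) ℝ,
      (∑ i ∈ p.support, ∑ j ∈ p.support,
        coeff i p * coeff j p * (∑ γ ∈ q.support, coeff γ q * β (γ + (i + j))))
      = ∑ s : ι, c s * eval (lam s) q * (eval (lam s) p) ^ 2 := by
    intro p
    have hA : ∀ i j : Fin d →₀ ℕ,
        (∑ γ ∈ q.support, coeff γ q * β (γ + (i + j)))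
        = ∑ s : ι, c s * eval (lam s) q * (m s i * m s j) := by
      intro i j
      calc (∑ γ ∈ q.support, coeff γ q * β (γ + (i + j)))
          = ∑ γ ∈ q.support, ∑ s : ι,
              coeff γ q * (c s * (m s γ * (m s i * m s j))) := by
            apply Finset.sum_congr rfl; intro γ _
            rw [hβ, Finset.mul_sum]
            apply Finset.sum_congr rfl; intro s _
            have h1 : (∏ t : Fin d, lam s t ^ (γ + (i + j)) t)
                = m s γ * (m s i * m s j) := by
              rw [show (∏ t : Fin d, lam s t ^ (γ + (i + j)) t) = m s (γ + (i + j)) from rfl,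
                hmadd, hmadd]
            rw [h1]
        _ = ∑ s : ι, ∑ γ ∈ q.support,
              coeff γ q * (c s * (m s γ * (m s i * m s j))) := Finset.sum_comm
        _ = ∑ s : ι, c s * eval (lam s) q * (m s i * m s j) := by
            apply Finset.sum_congr rfl; intro s _
            rw [heval, Finset.mul_sum, Finset.sum_mul]
            apply Finset.sum_congr rfl; intro γ _
            ring
    simp only [hA]
    rw [Finset.sum_comm]
    have : ∀ j ∈ p.support, (∑ i ∈ p.support,
        coeff i p * coeff j p * ∑ s : ι, c s * eval (lam s) q * (m s i * m s j))
        = ∑ s : ι, ∑ i ∈ p.support,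
            c s * eval (lam s) q * (coeff i p * m s i) * (coeff j p * m s j) := by
      intro j _
      rw [Finset.sum_comm]
      congr 1; ext s
      rw [Finset.mul_sum]
      congr 1; ext i
      ring
    rw [Finset.sum_congr rfl this, Finset.sum_comm]
    apply Finset.sum_congr rfl; intro s _
    simp only [heval, sq, Finset.sum_mul, Finset.mul_sum]
    apply Finset.sum_congr rfl; intro j _
    apply Finset.sum_congr rfl; intro i _
    apply Finset.sum_congr rfl; intro γ _
    ring
  intro l
  -- choose for each s ≠ l a coordinate where lam s differs from lam l
  have hex : ∀ s : ι, s ≠ l → ∃ t, lam s t ≠ lam l t := by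
    intro s hs
    by_contra h
    push_neg at h
    exact hs (hdist (funext h))
  -- interpolation polynomial
  set L : MvPolynomial (Fin d) ℝ := ∏ s : ι,
    if h : s = l then 1 else
      C (lam l (hex s h).choose - lam s (hex s h).choose)⁻¹ *
        (X (hex s h).choose - C (lam s (hex s h).choose)) with hL
  have hLl : eval (lam l) L = 1 := by
    rw [hL, map_prod]
    apply Finset.prod_eq_one
    intro s _
    by_cases h : s = l
    · simp [h]
    · have hne := (hex s h).choose_spec
      simp only [h, dif_neg, not_false_iff, map_mul, map_sub, eval_C, eval_X]
      have hne' : lam l (hex s h).choose - lam s (hex s h).choose ≠ 0 :=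
        sub_ne_zero.mpr hne.symm
      field_simp
  have hLr : ∀ r : ι, r ≠ l → eval (lam r) L = 0 := by
    intro r hr
    rw [hL, map_prod]
    apply Finset.prod_eq_zero (Finset.mem_univ r)
    simp [hr]
  have h0 := hpsd L
  rw [key L] at h0
  have hsum : (∑ s : ι, c s * eval (lam s) q * (eval (lam s) L) ^ 2)
      = c l * eval (lam l) q := by
    rw [Finset.sum_eq_single l]
    · rw [hLl]; ring
    · intro r _ hr
      rw [hLr r hr]; ring
    · intro h; exact absurd (Finset.mem_univ l) h
  rw [hsum] at h0
  nlinarith [hc l]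
end
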